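/- Let n ≥ 1 be a natural number, let A be a finite set of size 3n and B ⊆ A a subset of size 2n. Let r ≥ 1 and ω be integers with 3r/2 < ω ≤ 3n. Then the number of ω-element subsets S of A with |S ∩ B| < r, divided by C(3n, ω), is strictly less than exp(−(ω/3)·(1 − 3r/(2ω))²). -/

import Mathlib

open Finset

private lemma pade_exp (u : ℝ) (hu : 0 ≤ u) : (2 - u) * Real.exp u ≤ 2 + u := by
  have hderiv : ∀ t : ℝ, HasDerivAt (fun y : ℝ => (2 + y) * Real.exp (-y) + y)
      (1 - (1 + t) * Real.exp (-t)) t := by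
    intro t
    have h1 : HasDerivAt (fun y : ℝ => 2 + y) 1 t := by
      simpa using (hasDerivAt_id t).const_add (2:ℝ)
    have h2 : HasDerivAt (fun y : ℝ => Real.exp (-y)) (-Real.exp (-t)) t := by
      convert (hasDerivAt_neg t).exp using 1; ring
    have h3 := (h1.mul h2).add (hasDerivAt_id t)
    refine h3.congr_deriv ?_
    ring
  have hmono : Monotone (fun y : ℝ => (2 + y) * Real.exp (-y) + y) := by
    apply monotone_of_deriv_nonneg
    · exact fun t => (hderiv t).differentiableAt
    · intro t
      rw [(hderiv t).deriv]
      have h := Real.add_one_le_exp t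
      have he : Real.exp (-t) * Real.exp t = 1 := by
        rw [← Real.exp_add]; simp
      nlinarith [Real.exp_pos (-t), Real.exp_pos t]
  have h0 := hmono hu
  simp only [neg_zero, Real.exp_zero, mul_one, add_zero] at h0
  have he : Real.exp (-u) * Real.exp u = 1 := by
    rw [← Real.exp_add]; simp
  nlinarith [Real.exp_pos u, Real.exp_pos (-u)]

private lemma card_superset_count {V : Type*} [DecidableEq V] (A T : Finset V)
    (hT : T ⊆ A) (ω : ℕ) (hjω : T.card ≤ ω) :
    ((A.powersetCard ω).filter (fun S => T ⊆ S)).card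
      = (A.card - T.card).choose (ω - T.card) := by
  rw [← Finset.card_sdiff_of_subset hT, ← Finset.card_powersetCard (ω - T.card) (A \ T)]
  apply Finset.card_nbij' (fun S => S \ T) (fun U => U ∪ T)
  · intro S hS
    simp only [mem_coe, mem_filter, mem_powersetCard] at hS
    obtain ⟨⟨hSA, hScard⟩, hTS⟩ := hS
    rw [mem_coe, mem_powersetCard]
    constructor
    · exact sdiff_subset_sdiff hSA (Finset.Subset.refl T)
    · rw [Finset.card_sdiff_of_subset hTS, hScard]
  · intro U hU
    rw [mem_coe, mem_powersetCard] at hU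
    obtain ⟨hUsub, hUcard⟩ := hU
    have hdisj : Disjoint U T := (Finset.subset_sdiff.1 hUsub).2
    simp only [mem_coe, mem_filter, mem_powersetCard]
    refine ⟨⟨?_, ?_⟩, Finset.subset_union_right⟩
    · exact Finset.union_subset ((hUsub.trans (Finset.sdiff_subset))) hT
    · rw [Finset.card_union_of_disjoint hdisj, hUcard]
      omega
  · intro S hS
    simp only [mem_coe, mem_filter, mem_powersetCard] at hS
    exact Finset.sdiff_union_of_subset hS.2
  · intro U hU
    rw [mem_coe, mem_powersetCard] at hU
    have hdisj : Disjoint U T := (Finset.subset_sdiff.1 hU.1).2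
    beta_reduce
    rw [Finset.union_sdiff_right, Finset.sdiff_eq_self_of_disjoint hdisj]

private lemma sum_choose_inter {V : Type*} [DecidableEq V] (A D : Finset V)
    (hD : D ⊆ A) (ω j : ℕ) (hj : j ≤ ω) :
    ∑ S ∈ A.powersetCard ω, (S ∩ D).card.choose j
      = D.card.choose j * ((A.card - j).choose (ω - j)) := by
  have step1 : ∀ S ∈ A.powersetCard ω,
      (S ∩ D).card.choose j = ((D.powersetCard j).filter (fun T => T ⊆ S)).card := by
    intro S hS
    rw [← Finset.card_powersetCard j (S ∩ D)]
    congr 1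
    ext T
    simp only [mem_powersetCard, mem_filter, Finset.subset_inter_iff]
    tauto
  rw [Finset.sum_congr rfl step1]
  simp_rw [Finset.card_filter]
  rw [Finset.sum_comm]
  have step2 : ∀ T ∈ D.powersetCard j,
      (∑ S ∈ A.powersetCard ω, if T ⊆ S then 1 else 0)
        = (A.card - j).choose (ω - j) := by
    intro T hT
    rw [mem_powersetCard] at hT
    rw [← Finset.card_filter]
    rw [card_superset_count A T (hT.1.trans hD) ω (by omega)]
    rw [hT.2]
  rw [Finset.sum_congr rfl step2, Finset.sum_const, Finset.card_powersetCard, smul_eq_mul]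

private lemma pow_mul_choose_le (n j : ℕ) : 3 ^ j * n.choose j ≤ (3 * n).choose j := by
  have hd : 3 ^ j * n.descFactorial j ≤ (3 * n).descFactorial j := by
    induction j with
    | zero => simp
    | succ k ih =>
      rw [Nat.descFactorial_succ, Nat.descFactorial_succ, pow_succ]
      calc 3 ^ k * 3 * ((n - k) * n.descFactorial k)
          = (3 * (n - k)) * (3 ^ k * n.descFactorial k) := by ring
        _ ≤ (3 * n - k) * ((3 * n).descFactorial k) := Nat.mul_le_mul (by omega) ih
  rw [Nat.choose_eq_descFactorial_div_factorial, Nat.choose_eq_descFactorial_div_factorial,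
    ← Nat.mul_div_assoc _ (Nat.factorial_dvd_descFactorial _ _)]
  exact Nat.div_le_div_right hd

private lemma per_j_bound (n ω j : ℕ) (hj : j ≤ ω) (hω : ω ≤ 3 * n) :
    ((n.choose j : ℝ) * (((3 * n - j).choose (ω - j) : ℕ) : ℝ))
      ≤ ((3 * n).choose ω : ℝ) * (ω.choose j : ℝ) * (1 / 3) ^ j := by
  have hid : (3 * n).choose ω * ω.choose j = (3 * n).choose j * ((3 * n - j).choose (ω - j)) :=
    Nat.choose_mul hj
  have hnat : 3 ^ j * (n.choose j * ((3 * n - j).choose (ω - j)))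
      ≤ (3 * n).choose ω * ω.choose j := by
    rw [hid, ← mul_assoc]
    exact Nat.mul_le_mul_right _ (pow_mul_choose_le n j)
  have hcast := (Nat.cast_le (α := ℝ)).2 hnat
  push_cast at hcast
  have h3 : (0:ℝ) < 3 ^ j := by positivity
  rw [one_div, inv_pow, mul_comm (((3 * n).choose ω : ℝ) * _), ← div_eq_inv_mul,
    le_div_iff₀ h3]
  nlinarith [hcast]

private lemma master_mgf {V : Type*} [DecidableEq V] (n : ℕ) (A B : Finset V)
    (hA : A.card = 3 * n) (hBA : B ⊆ A) (hB : B.card = 2 * n)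
    (r ω m : ℕ) (hm : m = ω - r + 1) (hrω : r ≤ ω) (hω2 : ω ≤ 3 * n)
    (y : ℝ) (hy : 1 ≤ y) :
    (((A.powersetCard ω).filter (fun S => (S ∩ B).card < r)).card : ℝ) * y ^ m
      ≤ ((3 * n).choose ω : ℝ) * (1 + (y - 1) / 3) ^ ω := by
  set D := A \ B with hDdef
  have hD : D.card = n := by
    rw [hDdef, Finset.card_sdiff_of_subset hBA, hA, hB]; omega
  have hDA : D ⊆ A := Finset.sdiff_subset
  have hy0 : (0:ℝ) ≤ y := by linarith
  have hy10 : (0:ℝ) ≤ y - 1 := by linarith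
  have hcards : ∀ S ∈ A.powersetCard ω, (S ∩ D).card + (S ∩ B).card = ω := by
    intro S hS
    rw [mem_powersetCard] at hS
    have h1 : S ∩ D = S \ B := by
      rw [hDdef, ← Finset.inter_sdiff_assoc, Finset.inter_eq_left.2 hS.1]
    rw [h1, add_comm, Finset.card_inter_add_card_sdiff, hS.2]
  calc (((A.powersetCard ω).filter (fun S => (S ∩ B).card < r)).card : ℝ) * y ^ m
      = ∑ _S ∈ (A.powersetCard ω).filter (fun S => (S ∩ B).card < r), y ^ m := by
        rw [Finset.sum_const, nsmul_eq_mul]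
    _ ≤ ∑ S ∈ (A.powersetCard ω).filter (fun S => (S ∩ B).card < r), y ^ (S ∩ D).card := by
        apply Finset.sum_le_sum
        intro S hS
        rw [Finset.mem_filter] at hS
        have h1 := hcards S hS.1
        have h2 := hS.2
        exact pow_le_pow_right₀ hy (by omega)
    _ ≤ ∑ S ∈ A.powersetCard ω, y ^ (S ∩ D).card := by
        apply Finset.sum_le_sum_of_subset_of_nonneg (Finset.filter_subset _ _)
        intro S _ _
        positivity
    _ = ∑ S ∈ A.powersetCard ω, ∑ j ∈ Finset.range (ω + 1),
          (y - 1) ^ j * (((S ∩ D).card.choose j : ℕ) : ℝ) := by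
        apply Finset.sum_congr rfl
        intro S hS
        have hk : (S ∩ D).card ≤ ω := by
          have := hcards S hS; omega
        have expand : y ^ (S ∩ D).card = ∑ j ∈ Finset.range ((S ∩ D).card + 1),
            (y - 1) ^ j * (((S ∩ D).card.choose j : ℕ) : ℝ) := by
          conv_lhs => rw [show y = (y - 1) + 1 by ring]
          rw [add_pow]
          apply Finset.sum_congr rfl
          intro j _
          rw [one_pow, mul_one]
        rw [expand]
        apply Finset.sum_subset
        · intro j hj
          rw [Finset.mem_range] at *
          omega
        · intro j _ hj
          rw [Finset.mem_range, not_lt] at hj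
          rw [Nat.choose_eq_zero_of_lt (by omega)]
          simp
    _ = ∑ j ∈ Finset.range (ω + 1),
          (y - 1) ^ j * ((∑ S ∈ A.powersetCard ω, (S ∩ D).card.choose j : ℕ) : ℝ) := by
        rw [Finset.sum_comm]
        apply Finset.sum_congr rfl
        intro j _
        rw [Nat.cast_sum, Finset.mul_sum]
    _ = ∑ j ∈ Finset.range (ω + 1),
          (y - 1) ^ j * ((n.choose j : ℝ) * (((3 * n - j).choose (ω - j) : ℕ) : ℝ)) := by
        apply Finset.sum_congr rfl
        intro j hj
        rw [Finset.mem_range] at hj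
        rw [sum_choose_inter A D hDA ω j (by omega), hD, hA]
        push_cast
        ring
    _ ≤ ∑ j ∈ Finset.range (ω + 1),
          (y - 1) ^ j * (((3 * n).choose ω : ℝ) * (ω.choose j : ℝ) * (1 / 3) ^ j) := by
        apply Finset.sum_le_sum
        intro j hj
        rw [Finset.mem_range] at hj
        exact mul_le_mul_of_nonneg_left (per_j_bound n ω j (by omega) hω2) (by positivity)
    _ = ((3 * n).choose ω : ℝ) * (1 + (y - 1) / 3) ^ ω := by
        rw [show (1 + (y - 1) / 3 : ℝ) = ((y - 1) / 3) + 1 by ring, add_pow, Finset.mul_sum]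
        apply Finset.sum_congr rfl
        intro j _
        rw [one_pow, mul_one]
        rw [div_eq_mul_one_div (y - 1) 3, mul_pow]
        ring

private lemma compare_lemma (a b d : ℝ) (hb0 : 0 < b) (hab : b ≤ a) (hd1 : 1 ≤ d)
    (ha2b2 : a ^ 2 = b ^ 2 + d + 3) (hab3 : a ≤ Real.sqrt 3 * b) :
    d ^ 2 / (12 * b ^ 2) < 2 / 3 * (a - b) ^ 2 := by
  have habs : 0 ≤ a - b := by linarith
  have hsqrt3 : Real.sqrt 3 ≤ 7 / 4 := by
    rw [show (7/4:ℝ) = Real.sqrt ((7/4)^2) from (Real.sqrt_sq (by norm_num)).symm]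
    exact Real.sqrt_le_sqrt (by norm_num)
  have hub : a + b ≤ 11 / 4 * b := by
    have := mul_le_mul_of_nonneg_right hsqrt3 hb0.le
    linarith
  have hprod2 : (a - b) * (a + b) = d + 3 := by linear_combination ha2b2
  have h1 : d + 3 ≤ 11 / 4 * ((a - b) * b) := by
    calc d + 3 = (a - b) * (a + b) := hprod2.symm
      _ ≤ (a - b) * (11 / 4 * b) := mul_le_mul_of_nonneg_left hub habs
      _ = 11 / 4 * ((a - b) * b) := by ring
  have h2 : (d + 3) ^ 2 ≤ (11 / 4 * ((a - b) * b)) ^ 2 := by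
    apply pow_le_pow_left₀ (by linarith) h1
  rw [div_lt_iff₀ (by positivity : (0:ℝ) < 12 * b ^ 2)]
  have h4 : 2 / 3 * (a - b) ^ 2 * (12 * b ^ 2) - d ^ 2
      = (128/121) * ((11 / 4 * ((a - b) * b)) ^ 2 - (d + 3) ^ 2)
        + (7/121) * d ^ 2 + (768/121) * d + 1152/121 := by ring
  linarith [h2, hd1, sq_nonneg d, h4]

set_option maxHeartbeats 1000000 in
/-- Combinatorial core of the security proof of the threshold scheme against
high-weight Pauli attacks: among `3n` positions of which `2n` hold traps, a
uniformly random `ω`-element subset hits fewer than `r` trap positions with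
probability less than `exp(−(ω/3)·(1 − 3r/(2ω))²)`, provided `3r/2 < ω ≤ 3n`. -/
theorem threshold_trap_detection {V : Type*} [DecidableEq V] (n : ℕ) (hn : 1 ≤ n)
    (A B : Finset V) (hA : A.card = 3 * n) (hBA : B ⊆ A) (hB : B.card = 2 * n)
    (r ω : ℕ) (hr : 1 ≤ r) (hω1 : (3 * r : ℝ) / 2 < (ω : ℝ)) (hω2 : ω ≤ 3 * n) :
    (((A.powersetCard ω).filter (fun S => (S ∩ B).card < r)).card : ℝ)
        / ((3 * n).choose ω : ℝ)
      < Real.exp (-((ω : ℝ) / 3 * (1 - 3 * r / (2 * ω)) ^ 2)) := by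
  have hrω : 3 * r < 2 * ω := by
    exact_mod_cast (by push_cast; linarith : ((3 * r : ℕ) : ℝ) < ((2 * ω : ℕ) : ℝ))
  have hrltω : r < ω := by omega
  have hω0 : 0 < ω := by omega
  set m : ℕ := ω - r + 1 with hmdef
  have hmω : m ≤ ω := by omega
  have hmcast : (m : ℝ) = (ω : ℝ) - r + 1 := by
    rw [hmdef]
    push_cast [Nat.cast_sub hrltω.le]
    ring
  set d : ℝ := 2 * (ω : ℝ) - 3 * r with hddef
  have hd1 : 1 ≤ d := by
    have : ((3 * r + 1 : ℕ) : ℝ) ≤ ((2 * ω : ℕ) : ℝ) := by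
      exact_mod_cast (by omega : 3 * r + 1 ≤ 2 * ω)
    push_cast at this
    rw [hddef]; linarith
  have h3m : (3 : ℝ) * m = (ω : ℝ) + d + 3 := by rw [hmcast, hddef]; ring
  set a : ℝ := Real.sqrt (3 * m) with hadef
  set b : ℝ := Real.sqrt ω with hbdef
  have hb0 : 0 < b := Real.sqrt_pos.2 (by exact_mod_cast hω0)
  have ha0 : 0 < a := Real.sqrt_pos.2 (by rw [h3m]; linarith)
  have hb2 : b ^ 2 = (ω : ℝ) := Real.sq_sqrt (by positivity)
  have ha2 : a ^ 2 = 3 * m := Real.sq_sqrt (by rw [h3m]; linarith)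
  have hab : b ≤ a := by
    rw [hadef, hbdef]
    exact Real.sqrt_le_sqrt (by linarith)
  have hr' : (1:ℝ) ≤ r := by exact_mod_cast hr
  set s : ℝ := 2 * (a - b) / b with hsdef
  set u : ℝ := 2 * (a - b) / a with hudef
  have habs : 0 ≤ a - b := by linarith
  have hs0 : 0 ≤ s := by rw [hsdef]; positivity
  have hu0 : 0 ≤ u := by rw [hudef]; positivity
  set y : ℝ := 1 + s with hydef
  have hy : 1 ≤ y := by rw [hydef]; linarith
  have key := master_mgf n A B hA hBA hB r ω m hmdef hrltω.le hω2 y hy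
  rw [show y - 1 = s by rw [hydef]; ring] at key
  have hC : (0:ℝ) < ((3 * n).choose ω : ℝ) := by exact_mod_cast Nat.choose_pos hω2
  have h2upos : 0 < 2 - u := by
    have h2u : 2 - u = 2 * b / a := by rw [hudef]; field_simp; ring
    rw [h2u]; positivity
  have hprodu : (2 - u) * y = 2 + u := by
    rw [hudef, hydef, hsdef]; field_simp; ring
  have hexpu : Real.exp u ≤ y := by
    have hp := pade_exp u hu0
    rw [← hprodu] at hp
    exact le_of_mul_le_mul_left hp h2upos
  have bound2 : Real.exp (u * (m:ℝ)) ≤ y ^ m := by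
    have h1 : Real.exp (u * (m:ℝ)) = Real.exp u ^ m := by
      rw [← Real.exp_nat_mul]; ring_nf
    rw [h1]
    exact pow_le_pow_left₀ (Real.exp_pos u).le hexpu m
  have bound1 : (1 + s / 3) ^ ω ≤ Real.exp ((ω : ℝ) * (s / 3)) := by
    rw [Real.exp_nat_mul]
    exact pow_le_pow_left₀ (by positivity) (by linarith [Real.add_one_le_exp (s / 3)]) ω
  have hmeq : (m : ℝ) = a ^ 2 / 3 := by rw [ha2]; ring
  have hexps : (ω : ℝ) * (s / 3) - u * (m:ℝ) = -(2 / 3 * (a - b) ^ 2) := by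
    rw [hsdef, hudef, hmeq, ← hb2]
    field_simp
    ring
  have hωne : (ω:ℝ) ≠ 0 := by positivity
  have hEeq : (ω : ℝ) / 3 * (1 - 3 * r / (2 * ω)) ^ 2 = d ^ 2 / (12 * b ^ 2) := by
    rw [hddef, hb2]
    field_simp
    ring
  have hab3 : a ≤ Real.sqrt 3 * b := by
    rw [hadef, hbdef, ← Real.sqrt_mul (by norm_num : (0:ℝ) ≤ 3)]
    exact Real.sqrt_le_sqrt (by linarith)
  have ha2b2 : a ^ 2 = b ^ 2 + d + 3 := by rw [ha2, h3m, hb2]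
  have hEcomp : d ^ 2 / (12 * b ^ 2) < 2 / 3 * (a - b) ^ 2 :=
    compare_lemma a b d hb0 hab hd1 ha2b2 hab3
  have hym : (0:ℝ) < y ^ m := by positivity
  rw [div_lt_iff₀ hC]
  calc (((A.powersetCard ω).filter (fun S => (S ∩ B).card < r)).card : ℝ)
      = (((A.powersetCard ω).filter (fun S => (S ∩ B).card < r)).card : ℝ) * y ^ m / y ^ m := by
        field_simp
    _ ≤ ((3 * n).choose ω : ℝ) * (1 + s / 3) ^ ω / y ^ m := by
        exact div_le_div_of_nonneg_right key hym.le
    _ ≤ ((3 * n).choose ω : ℝ) * Real.exp ((ω : ℝ) * (s / 3)) / Real.exp (u * (m:ℝ)) := by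
        exact div_le_div₀ (by positivity) (mul_le_mul_of_nonneg_left bound1 hC.le)
          (Real.exp_pos _) bound2
    _ = ((3 * n).choose ω : ℝ) * Real.exp ((ω : ℝ) * (s / 3) - u * (m:ℝ)) := by
        rw [Real.exp_sub]; ring
    _ = ((3 * n).choose ω : ℝ) * Real.exp (-(2 / 3 * (a - b) ^ 2)) := by rw [hexps]
    _ < Real.exp (-((ω : ℝ) / 3 * (1 - 3 * r / (2 * ω)) ^ 2)) * ((3 * n).choose ω : ℝ) := by
        rw [mul_comm]
        apply mul_lt_mul_of_pos_right _ hC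
        apply Real.exp_lt_exp.2
        rw [hEeq]
        exact neg_lt_neg hEcomp
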